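/- For any matrix B in SL(2,ℝ) and any unit vector φ in ℝ², we have max{‖B²φ‖, ‖Bφ‖, ‖B⁻¹φ‖} ≥ 1/4. -/

import Mathlib

open Matrix

theorem sl2_vector_growth
    (B : Matrix.SpecialLinearGroup (Fin 2) ℝ) (φ : EuclideanSpace ℝ (Fin 2))
    (hφ : ‖φ‖ = 1) :
    (1 / 4 : ℝ) ≤
      max ‖Matrix.toEuclideanCLM (𝕜 := ℝ) ((B * B : Matrix.SpecialLinearGroup (Fin 2) ℝ) :
            Matrix (Fin 2) (Fin 2) ℝ) φ‖
        (max ‖Matrix.toEuclideanCLM (𝕜 := ℝ) (B : Matrix (Fin 2) (Fin 2) ℝ) φ‖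
          ‖Matrix.toEuclideanCLM (𝕜 := ℝ) ((B⁻¹ : Matrix.SpecialLinearGroup (Fin 2) ℝ) :
            Matrix (Fin 2) (Fin 2) ℝ) φ‖) := by
  set M : Matrix (Fin 2) (Fin 2) ℝ := (B : Matrix (Fin 2) (Fin 2) ℝ) with hM
  set t : ℝ := M.trace with ht
  -- B⁻¹ = t • 1 - M
  have hdet : M.det = 1 := B.2
  have hinv : ((B⁻¹ : Matrix.SpecialLinearGroup (Fin 2) ℝ) : Matrix (Fin 2) (Fin 2) ℝ)
      = t • (1 : Matrix (Fin 2) (Fin 2) ℝ) - M := by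
    rw [Matrix.SpecialLinearGroup.coe_inv, Matrix.adjugate_fin_two]
    ext i j
    fin_cases i <;> fin_cases j <;>
      simp [Matrix.trace_fin_two, Matrix.one_apply, ht, hM]
  have hmulinv : M * ((B⁻¹ : Matrix.SpecialLinearGroup (Fin 2) ℝ) : Matrix (Fin 2) (Fin 2) ℝ)
      = 1 := by
    rw [← Matrix.SpecialLinearGroup.coe_mul, mul_inv_cancel]
    simp
  have hsq : ((B * B : Matrix.SpecialLinearGroup (Fin 2) ℝ) : Matrix (Fin 2) (Fin 2) ℝ)
      = t • M - 1 := by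
    have : M * (t • (1 : Matrix (Fin 2) (Fin 2) ℝ) - M) = 1 := by
      rw [← hinv]; exact hmulinv
    rw [Matrix.SpecialLinearGroup.coe_mul, ← hM]
    rw [Matrix.mul_sub, Matrix.mul_smul, Matrix.mul_one, sub_eq_iff_eq_add] at this
    rw [this]; abel
  set f := Matrix.toEuclideanCLM (𝕜 := ℝ) (n := Fin 2) with hf
  -- vector identities
  have hv1 : f ((B⁻¹ : Matrix.SpecialLinearGroup (Fin 2) ℝ) : Matrix (Fin 2) (Fin 2) ℝ) φ
      = t • φ - f M φ := by
    rw [hinv, map_sub, _root_.map_smul, _root_.map_one]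
    simp
  have hv2 : f ((B * B : Matrix.SpecialLinearGroup (Fin 2) ℝ) : Matrix (Fin 2) (Fin 2) ℝ) φ
      = t • (f M φ) - φ := by
    rw [hsq, map_sub, _root_.map_smul, _root_.map_one]
    simp
  set a := ‖f ((B * B : Matrix.SpecialLinearGroup (Fin 2) ℝ) : Matrix (Fin 2) (Fin 2) ℝ) φ‖
  set b := ‖f M φ‖
  set c := ‖f ((B⁻¹ : Matrix.SpecialLinearGroup (Fin 2) ℝ) : Matrix (Fin 2) (Fin 2) ℝ) φ‖
  have htle : |t| ≤ c + b := by
    have : t • φ = f ((B⁻¹ : Matrix.SpecialLinearGroup (Fin 2) ℝ) : Matrix (Fin 2) (Fin 2) ℝ) φ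
        + f M φ := by rw [hv1]; abel
    calc |t| = ‖t • φ‖ := by rw [norm_smul, hφ, mul_one]; simp
    _ ≤ c + b := by rw [this]; exact norm_add_le _ _
  have hone : (1 : ℝ) ≤ |t| * b + a := by
    have hφ' : φ = t • (f M φ)
        - f ((B * B : Matrix.SpecialLinearGroup (Fin 2) ℝ) : Matrix (Fin 2) (Fin 2) ℝ) φ := by
      rw [hv2]; abel
    calc (1 : ℝ) = ‖φ‖ := hφ.symm
    _ = ‖t • (f M φ)
        - f ((B * B : Matrix.SpecialLinearGroup (Fin 2) ℝ) : Matrix (Fin 2) (Fin 2) ℝ) φ‖ :=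
      congrArg norm hφ'
    _ ≤ ‖t • (f M φ)‖ + a := norm_sub_le _ _
    _ = |t| * b + a := by rw [norm_smul, Real.norm_eq_abs]
  by_contra h
  push_neg at h
  have ha : a < 1/4 := lt_of_le_of_lt (le_max_left _ _) h
  have hb : b < 1/4 := lt_of_le_of_lt (le_trans (le_max_left _ _) (le_max_right _ _)) h
  have hc : c < 1/4 := lt_of_le_of_lt (le_trans (le_max_right _ _) (le_max_right _ _)) h
  have hb0 : 0 ≤ b := norm_nonneg _
  nlinarith [abs_nonneg t, mul_le_mul_of_nonneg_right htle hb0]
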